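/- For a real constant c, the following are equivalent: (a) c ≤ -1/3; (b) for all 0 < x < y, c < (xy - L(x,y)^2)/((L(x,y) - x)(y - L(x,y))), where L is the logarithmic mean. -/

import Mathlib

open Real MeasureTheory Set Filter

noncomputable def uIG (a x : ℝ) : ℝ := ∫ t in Set.Ioi x, t ^ (a - 1) * Real.exp (-t)
noncomputable def Lmean (x y : ℝ) : ℝ := (y - x) / (Real.log y - Real.log x)

lemma mono_aux {F F' : ℝ → ℝ} (hd : ∀ s : ℝ, 1 ≤ s → HasDerivAt F (F' s) s)
    (h' : ∀ s : ℝ, 1 ≤ s → 0 ≤ F' s) {s : ℝ} (hs : 1 ≤ s) : F 1 ≤ F s := by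
  have hm : MonotoneOn F (Set.Ici 1) := by
    apply monotoneOn_of_deriv_nonneg (convex_Ici 1)
    · exact fun x hx => (hd x hx).continuousAt.continuousWithinAt
    · intro x hx
      rw [interior_Ici] at hx
      exact (hd x hx.le).differentiableAt.differentiableWithinAt
    · intro x hx
      rw [interior_Ici] at hx
      rw [(hd x hx.le).deriv]
      exact h' x hx.le
  exact hm (by simp) (by simpa using hs) hs

lemma l1 {s : ℝ} (hs : 1 ≤ s) : Real.log s ≤ (s - s⁻¹)/2 := by
  have key := mono_aux (F := fun s => (s - s⁻¹)/2 - Real.log s)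
    (F' := fun s => (1 - (-1/s^2))/2 - s⁻¹) ?_ ?_ hs
  · simp only [Real.log_one, inv_one] at key
    norm_num at key
    linarith
  · intro t ht
    have ht0 : (0:ℝ) < t := lt_of_lt_of_le one_pos ht
    have h1 := (((hasDerivAt_id t).sub ((hasDerivAt_id t).inv ht0.ne')).div_const 2).sub
      (Real.hasDerivAt_log ht0.ne')
    simp at h1 ⊢; exact h1
  · intro t ht
    have ht0 : (0:ℝ) < t := lt_of_lt_of_le one_pos ht
    have h : (1 - (-1/t^2))/2 - t⁻¹ = (t-1)^2/(2*t^2) := by field_simp; ring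
    simp only [h]
    positivity

/-- Padé upper bound: `(4s+2) log s ≤ (s-1)(s+5)` for `s ≥ 1`. -/
lemma l2 {s : ℝ} (hs : 1 ≤ s) : (4*s+2) * Real.log s ≤ (s-1)*(s+5) := by
  have key := mono_aux (F := fun s => (s-1)*(s+5) - (4*s+2) * Real.log s)
    (F' := fun s => 2*s - 2*s⁻¹ - 4 * Real.log s) ?_ ?_ hs
  · simp only [Real.log_one] at key
    norm_num at key
    linarith
  · intro t ht
    have ht0 : (0:ℝ) < t := lt_of_lt_of_le one_pos ht
    have h1 := (((hasDerivAt_id t).sub_const 1).mul ((hasDerivAt_id t).add_const 5)).sub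
      ((((hasDerivAt_id t).const_mul 4).add_const 2).mul (Real.hasDerivAt_log ht0.ne'))
    simp only [id_eq] at h1
    refine h1.congr_deriv ?_
    field_simp; ring
  · intro t ht
    have := l1 ht
    linarith

/-- `0 ≤ 2 log s + 4/s - 1/s² - 3` for `s ≥ 1`. -/
lemma l3 {s : ℝ} (hs : 1 ≤ s) : 0 ≤ 2 * Real.log s + 4*s⁻¹ - (s^2)⁻¹ - 3 := by
  have key := mono_aux (F := fun s => 2 * Real.log s + 4*s⁻¹ - (s^2)⁻¹ - 3)
    (F' := fun s => 2*s⁻¹ + 4*(-1/s^2) - (-(2*s)/(s^2)^2)) ?_ ?_ hs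
  · simp only [Real.log_one] at key
    norm_num at key
    linarith
  · intro t ht
    have ht0 : (0:ℝ) < t := lt_of_lt_of_le one_pos ht
    have h1 : HasDerivAt (fun s : ℝ => 2 * Real.log s + 4*s⁻¹ - (s^2)⁻¹ - 3)
        (2*t⁻¹ + 4*(-1/t^2) - (-(2*t)/(t^2)^2)) t := by
      have hsq : HasDerivAt (fun s : ℝ => (s^2)⁻¹) (-(2*t)/(t^2)^2) t := by
        have := ((hasDerivAt_pow 2 t)).inv (by positivity)
        simp at this ⊢; exact this
      exact ((((Real.hasDerivAt_log ht0.ne').const_mul 2).add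
        (((hasDerivAt_id t).inv ht0.ne').const_mul 4)).sub hsq).sub_const 3
    convert h1 using 1
  · intro t ht
    have ht0 : (0:ℝ) < t := lt_of_lt_of_le one_pos ht
    have h : 2*t⁻¹ + 4*(-1/t^2) - (-(2*t)/(t^2)^2) = 2*(t-1)^2/t^3 := by field_simp; ring
    simp only [h]
    positivity

lemma l4 {s : ℝ} (hs : 1 ≤ s) : 0 ≤ (2*s+4) * Real.log s - 5*s + 4 + s⁻¹ := by
  have key := mono_aux (F := fun s => (2*s+4) * Real.log s - 5*s + 4 + s⁻¹)
    (F' := fun s => 2 * Real.log s + 4*s⁻¹ - (s^2)⁻¹ - 3) ?_ ?_ hs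
  · simp only [Real.log_one] at key
    norm_num at key
    linarith
  · intro t ht
    have ht0 : (0:ℝ) < t := lt_of_lt_of_le one_pos ht
    have h1 := (((((((hasDerivAt_id t).const_mul 2).add_const 4).mul
      (Real.hasDerivAt_log ht0.ne')).sub ((hasDerivAt_id t).const_mul 5)).add_const 4).add
      ((hasDerivAt_id t).inv ht0.ne'))
    simp only [id_eq] at h1
    refine h1.congr_deriv ?_
    field_simp; ring
  · intro t ht
    exact l3 ht

lemma l5 {s : ℝ} (hs : 1 ≤ s) : 3*(s^2-1) ≤ (s^2+4*s+1) * Real.log s := by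
  have key := mono_aux (F := fun s => (s^2+4*s+1) * Real.log s - 3*(s^2-1))
    (F' := fun s => (2*s+4) * Real.log s - 5*s + 4 + s⁻¹) ?_ ?_ hs
  · simp only [Real.log_one] at key
    norm_num at key
    linarith
  · intro t ht
    have ht0 : (0:ℝ) < t := lt_of_lt_of_le one_pos ht
    have h1 := ((((hasDerivAt_pow 2 t).add ((hasDerivAt_id t).const_mul 4)).add_const 1).mul
      (Real.hasDerivAt_log ht0.ne')).sub (((hasDerivAt_pow 2 t).sub_const 1).const_mul 3)
    simp only [id_eq] at h1
    refine h1.congr_deriv ?_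
    simp only [Pi.add_apply, Nat.cast_ofNat]
    field_simp; ring
  · intro t ht
    exact l4 ht

lemma log_sub_pos {x y : ℝ} (hx : 0 < x) (hxy : x < y) : 0 < Real.log y - Real.log x :=
  sub_pos.2 (Real.log_lt_log hx hxy)

lemma Lmean_gt {x y : ℝ} (hx : 0 < x) (hxy : x < y) : x < Lmean x y := by
  have hy : 0 < y := hx.trans hxy
  have hr := log_sub_pos hx hxy
  rw [Lmean, lt_div_iff₀ hr]
  have h1 : Real.log (y/x) < y/x - 1 :=
    Real.log_lt_sub_one_of_pos (by positivity) (by intro h; rw [div_eq_one_iff_eq hx.ne'] at h; exact hxy.ne' h)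
  rw [Real.log_div hy.ne' hx.ne'] at h1
  have := (mul_lt_mul_iff_right₀ hx).2 h1
  have h2 : x*(y/x - 1) = y - x := by field_simp
  rw [h2] at this
  linarith [mul_sub x (Real.log y) (Real.log x), this]
  
lemma Lmean_lt {x y : ℝ} (hx : 0 < x) (hxy : x < y) : Lmean x y < y := by
  have hy : 0 < y := hx.trans hxy
  have hr := log_sub_pos hx hxy
  rw [Lmean, div_lt_iff₀ hr]
  have h1 : Real.log (x/y) < x/y - 1 :=
    Real.log_lt_sub_one_of_pos (by positivity) (by intro h; rw [div_eq_one_iff_eq hy.ne'] at h; exact hxy.ne h)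
  rw [Real.log_div hx.ne' hy.ne'] at h1
  have := (mul_lt_mul_iff_right₀ hy).2 h1
  have h2 : y*(x/y - 1) = x - y := by field_simp
  rw [h2] at this
  linarith [mul_sub y (Real.log x) (Real.log y), this]

lemma carlson {x y : ℝ} (hx : 0 < x) (hxy : x < y) :
    Lmean x y ≤ (x + y + 4*Real.sqrt (x*y))/6 := by
  have hy : 0 < y := hx.trans hxy
  set s := Real.sqrt y / Real.sqrt x with hs_def
  have hsx : 0 < Real.sqrt x := Real.sqrt_pos.2 hx
  have hsy : 0 < Real.sqrt y := Real.sqrt_pos.2 hy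
  have hs0 : 0 < s := by positivity
  have hs2 : s^2 = y/x := by
    rw [hs_def, div_pow, Real.sq_sqrt hy.le, Real.sq_sqrt hx.le]
  have hs1 : 1 < s := by
    have : (1:ℝ) < y/x := (one_lt_div hx).2 hxy
    nlinarith
  have hxx : Real.sqrt x * Real.sqrt x = x := Real.mul_self_sqrt hx.le
  have hG : Real.sqrt (x*y) = s * x := by
    rw [Real.sqrt_mul hx.le, hs_def, div_mul_eq_mul_div, eq_div_iff hsx.ne']
    linear_combination Real.sqrt y * hxx
  have hlog : Real.log y - Real.log x = 2 * Real.log s := by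
    rw [← Real.log_div hy.ne' hx.ne', ← hs2, Real.log_pow]
    push_cast; ring
  have hls : 0 < Real.log s := Real.log_pos hs1
  have hyx : y = s^2 * x := by
    rw [hs2]; field_simp
  have h5 := l5 hs1.le
  rw [Lmean, hlog, hG, div_le_div_iff₀ (by linarith) (by norm_num)]
  calc (y - x) * 6 = 3*(s^2-1) * (2*x) := by rw [hyx]; ring
    _ ≤ (s^2+4*s+1) * Real.log s * (2*x) := by
        apply mul_le_mul_of_nonneg_right h5 (by linarith)
    _ = (x + y + 4*(s*x)) * (2 * Real.log s) := by rw [hyx]; ring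

lemma fwd {x y : ℝ} (hx : 0 < x) (hxy : x < y) :
    -1/3 < (x * y - Lmean x y ^ 2) / ((Lmean x y - x) * (y - Lmean x y)) := by
  have hy : 0 < y := hx.trans hxy
  set L := Lmean x y with hL_def
  have hLx : x < L := Lmean_gt hx hxy
  have hLy : L < y := Lmean_lt hx hxy
  have hL0 : 0 < L := hx.trans hLx
  set G := Real.sqrt (x*y) with hG_def
  have hG0 : 0 < G := Real.sqrt_pos.2 (by positivity)
  have hG2 : G^2 = x*y := Real.sq_sqrt (by positivity)
  have hML : L ≤ (x + y + 4*G)/6 := carlson hx hxy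
  have hAG : 2*G < x + y := by
    nlinarith [sq_nonneg (Real.sqrt x - Real.sqrt y), Real.sq_sqrt hx.le, Real.sq_sqrt hy.le,
      Real.sqrt_mul hx.le y, mul_pos (Real.sqrt_pos.2 hx) (Real.sqrt_pos.2 hy),
      Real.sqrt_lt_sqrt hx.le hxy]
  have hD : 0 < (L - x) * (y - L) := mul_pos (by linarith) (by linarith)
  rw [lt_div_iff₀ hD]
  have hP : 0 < 2*(x*y) + (x+y)*L - 4*L^2 := by
    have hM0 : 0 < (x + y + 4*G)/6 := by positivity
    nlinarith [mul_nonneg (sub_nonneg.2 hML) (sq_nonneg G),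
      mul_pos hL0 (mul_pos hM0 (sub_pos.2 hAG)),
      mul_pos hL0 (pow_pos (sub_pos.2 hAG) 2),
      mul_nonneg (mul_nonneg hL0.le hM0.le) (sub_nonneg.2 hML), hG2]
  nlinarith [hP]

lemma bwd {c : ℝ} (hc : -1/3 < c) :
    ∃ x y : ℝ, 0 < x ∧ x < y ∧
      (x * y - Lmean x y ^ 2) / ((Lmean x y - x) * (y - Lmean x y)) ≤ c := by
  set k : ℝ := max (-c) (1/4) with hk_def
  have hk1 : k < 1/3 := by
    apply max_lt (by linarith) (by norm_num)
  have hck : -k ≤ c := by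
    have : -c ≤ k := le_max_left _ _
    linarith
  set ε : ℝ := 4*(1/3 - k) with hε_def
  have hε0 : 0 < ε := by simp only [hε_def]; linarith
  have hε1 : ε ≤ 1 := by
    have : (1:ℝ)/4 ≤ k := le_max_right _ _
    simp only [hε_def]; linarith
  have hkε : k = 1/3 - ε/4 := by simp only [hε_def]; ring
  have hy1 : (1:ℝ) < 1 + ε := by linarith
  refine ⟨1, 1+ε, one_pos, hy1, ?_⟩
  set L := Lmean 1 (1+ε) with hL_def
  have hL1 : 1 < L := Lmean_gt one_pos hy1
  have hLy : L < 1 + ε := Lmean_lt one_pos hy1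
  have hr : 0 < Real.log (1+ε) := Real.log_pos hy1
  have hLval : L = ε / Real.log (1+ε) := by
    rw [hL_def, Lmean, Real.log_one]
    ring_nf
  have hl2 := l2 hy1.le
  -- lower bound on L
  have hLlb : (4*ε+6)/(ε+6) ≤ L := by
    rw [hLval, div_le_div_iff₀ (by linarith) hr]
    nlinarith [hl2]
  have hD : 0 < (L - 1) * ((1+ε) - L) := mul_pos (by linarith) (by linarith)
  rw [div_le_iff₀ hD]
  have hDle : (L - 1) * ((1+ε) - L) ≤ ε^2/4 := by
    nlinarith [sq_nonneg ((L-1) - ((1+ε)-L))]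
  have hlb0 : (0:ℝ) < (4*ε+6)/(ε+6) := by positivity
  have hL2 : ε^2*(3-ε)/(ε+6)^2 ≤ L^2 - (1+ε) := by
    have hsq : ((4*ε+6)/(ε+6))^2 ≤ L^2 := by
      apply pow_le_pow_left₀ hlb0.le hLlb
    have hid : ((4*ε+6)/(ε+6))^2 - (1+ε) = ε^2*(3-ε)/(ε+6)^2 := by
      field_simp
      ring
    linarith
  have harith : k * (ε^2/4) ≤ ε^2*(3-ε)/(ε+6)^2 := by
    rw [hkε, le_div_iff₀ (show (0:ℝ) < (ε+6)^2 by positivity)]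
    nlinarith [hε0, hε1, sq_nonneg ε, mul_nonneg hε0.le (sub_nonneg.2 hε1),
      mul_nonneg (mul_nonneg hε0.le hε0.le) (sub_nonneg.2 hε1),
      mul_nonneg (mul_nonneg (mul_nonneg hε0.le hε0.le) hε0.le) (sub_nonneg.2 hε1)]
  have hkD : k * ((L - 1) * ((1+ε) - L)) ≤ L^2 - (1+ε) := by
    calc k * ((L - 1) * ((1+ε) - L)) ≤ k * (ε^2/4) := by
          apply mul_le_mul_of_nonneg_left hDle (by simp only [hk_def]; positivity)
      _ ≤ ε^2*(3-ε)/(ε+6)^2 := harith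
      _ ≤ L^2 - (1+ε) := hL2
  have hcD : -k * ((L - 1) * ((1+ε) - L)) ≤ c * ((L - 1) * ((1+ε) - L)) :=
    mul_le_mul_of_nonneg_right hck hD.le
  nlinarith [hkD, hcD]

theorem stmt11 (c : ℝ) :
    c ≤ -1/3 ↔ ∀ x y : ℝ, 0 < x → x < y →
      c < (x * y - Lmean x y ^ 2) / ((Lmean x y - x) * (y - Lmean x y)) := by
  constructor
  · intro hc x y hx hxy
    exact lt_of_le_of_lt hc (fwd hx hxy)
  · intro h
    by_contra hcon
    push_neg at hcon
    obtain ⟨x, y, hx, hxy, hle⟩ := bwd hcon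
    exact absurd (h x y hx hxy) (not_lt.2 hle)
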